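/- The half-period of the generalized sine function satisfies π̂/2 = ∫_0^1 dt/(1-t^p)^{1/p} = π/(p sin(π/p)) for every p > 1. -/
import Mathlib

open Real MeasureTheory Set intervalIntegral

lemma betaReal_integrable {a b : ℝ} (ha : 0 < a) (hb : 0 < b) :
    IntervalIntegrable (fun x : ℝ => x ^ (a - 1) * (1 - x) ^ (b - 1)) volume 0 1 := by
  have h := (Complex.betaIntegral_convergent (u := (a : ℂ)) (v := (b : ℂ))
    (by simpa using ha) (by simpa using hb))
  rw [intervalIntegrable_iff_integrableOn_Ioc_of_le zero_le_one] at h ⊢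
  refine IntegrableOn.congr_fun h.re (fun x hx => ?_) measurableSet_Ioc
  have hx0 : (0:ℝ) ≤ x := hx.1.le
  have hx1 : (0:ℝ) ≤ 1 - x := by linarith [hx.2]
  rw [show ((x:ℂ) ^ ((a:ℂ) - 1) * (1 - (x:ℂ)) ^ ((b:ℂ) - 1)) =
      ((x ^ (a - 1) * (1 - x) ^ (b - 1) : ℝ) : ℂ) by
    push_cast
    rw [Complex.ofReal_cpow hx0, Complex.ofReal_cpow hx1]
    push_cast
    ring]
  simp

lemma betaReal {a b : ℝ} (ha : 0 < a) (hb : 0 < b) :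
    ∫ x in (0:ℝ)..1, x ^ (a - 1) * (1 - x) ^ (b - 1)
      = Real.Gamma a * Real.Gamma b / Real.Gamma (a + b) := by
  have key := Complex.Gamma_mul_Gamma_eq_betaIntegral (s := (a : ℂ)) (t := (b : ℂ))
    (by simpa using ha) (by simpa using hb)
  have hbeta : Complex.betaIntegral a b
      = ((∫ x in (0:ℝ)..1, x ^ (a - 1) * (1 - x) ^ (b - 1) : ℝ) : ℂ) := by
    rw [Complex.betaIntegral]
    rw [intervalIntegral.integral_congr
      (g := fun x : ℝ => ((x ^ (a - 1) * (1 - x) ^ (b - 1) : ℝ) : ℂ)) (fun x hx => by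
        rw [uIcc_of_le zero_le_one] at hx
        have hx0 : (0:ℝ) ≤ x := hx.1
        have hx1 : (0:ℝ) ≤ 1 - x := by linarith [hx.2]
        push_cast
        rw [Complex.ofReal_cpow hx0, Complex.ofReal_cpow hx1]
        push_cast
        ring)]
    exact_mod_cast RCLike.intervalIntegral_ofReal (𝕜 := ℂ)
  rw [hbeta, show ((a:ℂ) + b) = ((a + b : ℝ) : ℂ) by push_cast; ring,
    Complex.Gamma_ofReal, Complex.Gamma_ofReal, Complex.Gamma_ofReal,
    ← Complex.ofReal_mul, ← Complex.ofReal_mul] at key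
  have hG : Real.Gamma (a + b) ≠ 0 := (Real.Gamma_pos_of_pos (by linarith)).ne'
  have h2 : Real.Gamma a * Real.Gamma b
      = Real.Gamma (a + b) * ∫ x in (0:ℝ)..1, x ^ (a - 1) * (1 - x) ^ (b - 1) :=
    Complex.ofReal_inj.mp key
  field_simp
  linarith [h2]

lemma subst_step {p : ℝ} (hp : 1 < p) :
    (∫ t in (0:ℝ)..1, (1 - t ^ p) ^ (-(1 / p)))
      = ∫ x in (0:ℝ)..1, (1 / p * x ^ (1 / p - 1)) * (1 - x) ^ (-(1 / p)) := by
  have hp0 : (0:ℝ) < p := by linarith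
  have hq0 : (0:ℝ) < 1 / p := by positivity
  have hq1 : 1 / p < 1 := by rw [div_lt_one hp0]; exact hp
  set f : ℝ → ℝ := fun x => x ^ (1 / p) with hf_def
  set f' : ℝ → ℝ := fun x => 1 / p * x ^ (1 / p - 1) with hf'_def
  set g : ℝ → ℝ := fun t => (1 - t ^ p) ^ (-(1 / p)) with hg_def
  have hfx : ∀ x : ℝ, 0 ≤ x → (f x) ^ p = x := by
    intro x hx
    show (x ^ (1 / p)) ^ p = x
    rw [← Real.rpow_mul hx, one_div_mul_cancel hp0.ne', Real.rpow_one]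
  have hf : ContinuousOn f (uIcc (0:ℝ) 1) :=
    continuousOn_id.rpow_const fun x _ => Or.inr hq0.le
  have hff' : ∀ x ∈ Ioo (min (0:ℝ) 1) (max 0 1), HasDerivWithinAt f (f' x) (Ioi x) x := by
    intro x hx
    rw [min_eq_left zero_le_one, max_eq_right zero_le_one] at hx
    exact (Real.hasDerivAt_rpow_const (Or.inl hx.1.ne')).hasDerivWithinAt
  have himg : f '' Ioo (min (0:ℝ) 1) (max 0 1) ⊆ Ioo 0 1 := by
    rw [min_eq_left zero_le_one, max_eq_right zero_le_one]
    rintro _ ⟨x, hx, rfl⟩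
    exact ⟨Real.rpow_pos_of_pos hx.1 _, Real.rpow_lt_one hx.1.le hx.2 hq0⟩
  have hg_cont : ContinuousOn g (Ioo (0:ℝ) 1) := by
    have h1 : ContinuousOn (fun t : ℝ => 1 - t ^ p) (Ioo (0:ℝ) 1) :=
      continuousOn_const.sub (continuousOn_id.rpow_const fun t ht => Or.inl ht.1.ne')
    refine h1.rpow_const fun t ht => Or.inl ?_
    have : t ^ p < 1 := Real.rpow_lt_one ht.1.le ht.2 hp0
    linarith
  have hgmeas : Measurable g := by rw [hg_def]; fun_prop
  -- the dominating bound
  have hBint : IntervalIntegrable (fun x : ℝ => (1 - x) ^ (-(1 / p))) volume 0 1 := by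
    have h := intervalIntegrable_rpow' (a := 0) (b := 1) (r := -(1 / p)) (by linarith)
    have := (h.comp_sub_left 1).symm
    simpa [one_div] using this
  have hg1 : IntegrableOn g (f '' uIcc (0:ℝ) 1) := by
    have hsub : f '' uIcc (0:ℝ) 1 ⊆ Icc 0 1 := by
      rintro _ ⟨x, hx, rfl⟩
      rw [uIcc_of_le zero_le_one] at hx
      exact ⟨Real.rpow_nonneg hx.1 _, Real.rpow_le_one hx.1 hx.2 hq0.le⟩
    refine IntegrableOn.mono_set ?_ hsub
    have hint : IntegrableOn (fun x : ℝ => (1 - x) ^ (-(1 / p))) (Icc (0:ℝ) 1) := by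
      rw [integrableOn_Icc_iff_integrableOn_Ioc]
      exact (intervalIntegrable_iff_integrableOn_Ioc_of_le zero_le_one).mp hBint
    refine Integrable.mono' hint (hgmeas.aestronglyMeasurable) ?_
    refine (ae_restrict_iff' measurableSet_Icc).mpr (Filter.Eventually.of_forall ?_)
    intro x hx
    have hxp1 : x ^ p ≤ 1 := Real.rpow_le_one hx.1 hx.2 hp0.le
    have hg_nonneg : 0 ≤ g x := Real.rpow_nonneg (by linarith) _
    rw [Real.norm_of_nonneg hg_nonneg]
    have hxp : x ^ p ≤ x := by
      rcases eq_or_lt_of_le hx.1 with h0 | h0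
      · rw [← h0, Real.zero_rpow hp0.ne']
      · calc x ^ p ≤ x ^ (1:ℝ) := Real.rpow_le_rpow_of_exponent_ge h0 hx.2 hp.le
          _ = x := Real.rpow_one x
    rcases eq_or_lt_of_le hx.2 with h1 | h1
    · have hne : -(1/p) ≠ 0 := neg_ne_zero.mpr (one_div_ne_zero hp0.ne')
      rw [hg_def]
      simp only [h1, Real.one_rpow, sub_self, Real.zero_rpow hne, le_refl]
    · exact Real.rpow_le_rpow_of_nonpos (by linarith) (by linarith) (by linarith [hq0])
  have hg2 : IntegrableOn (fun x => f' x • (g ∘ f) x) (uIcc (0:ℝ) 1) := by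
    rw [uIcc_of_le zero_le_one, integrableOn_Icc_iff_integrableOn_Ioc]
    have hb : IntegrableOn
        (fun x : ℝ => 1 / p * (x ^ (1 / p - 1) * (1 - x) ^ ((1 - 1 / p) - 1))) (Ioc 0 1) := by
      have := (betaReal_integrable hq0 (by linarith : (0:ℝ) < 1 - 1 / p)).const_mul (1 / p)
      exact (intervalIntegrable_iff_integrableOn_Ioc_of_le zero_le_one).mp this
    refine hb.congr_fun (fun x hx => ?_) measurableSet_Ioc
    have hx0 : (0:ℝ) ≤ x := hx.1.le
    simp only [Function.comp, smul_eq_mul, hg_def, hf'_def]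
    rw [hfx x hx0]
    ring_nf
  have key := integral_comp_smul_deriv''' hf hff' (hg_cont.mono himg) hg1 hg2
  have hf0 : f 0 = 0 := by rw [hf_def]; exact Real.zero_rpow hq0.ne'
  have hf1 : f 1 = 1 := by rw [hf_def]; exact Real.one_rpow _
  rw [hf0, hf1] at key
  rw [← key]
  refine intervalIntegral.integral_congr (fun x hx => ?_)
  rw [uIcc_of_le zero_le_one] at hx
  simp only [Function.comp, smul_eq_mul, hg_def, hf'_def]
  rw [hfx x hx.1]


/-- `π̂ = 2 ∫_0^1 dt/(1-t^p)^{1/p}`. -/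
noncomputable def pihat (p : ℝ) : ℝ := 2 * ∫ t in (0:ℝ)..1, (1 - t ^ p) ^ (-(1 / p))

/-- the half-period of the generalized sine satisfies
`π̂/2 = ∫_0^1 dt/(1-t^p)^{1/p} = π/(p sin(π/p))` for every `p > 1`. -/
theorem pihat_half_eq (p : ℝ) (hp : 1 < p) :
    pihat p / 2 = ∫ t in (0:ℝ)..1, (1 - t ^ p) ^ (-(1 / p)) ∧
    (∫ t in (0:ℝ)..1, (1 - t ^ p) ^ (-(1 / p))) = π / (p * Real.sin (π / p)) := by
  have hp0 : (0:ℝ) < p := by linarith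
  have hq0 : (0:ℝ) < 1 / p := by positivity
  have hq1 : 1 / p < 1 := by rw [div_lt_one hp0]; exact hp
  constructor
  · rw [pihat]; ring
  · rw [subst_step hp]
    have : (∫ x in (0:ℝ)..1, (1 / p * x ^ (1 / p - 1)) * (1 - x) ^ (-(1 / p)))
        = ∫ x in (0:ℝ)..1, 1 / p * (x ^ (1 / p - 1) * (1 - x) ^ ((1 - 1 / p) - 1)) := by
      refine intervalIntegral.integral_congr (fun x _ => ?_)
      rw [show (1 - 1 / p) - 1 = -(1 / p) by ring]
      ring
    rw [this, intervalIntegral.integral_const_mul, betaReal hq0 (by linarith),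
      show 1 / p + (1 - 1 / p) = 1 by ring, Real.Gamma_one,
      Real.Gamma_mul_Gamma_one_sub, show π * (1 / p) = π / p by ring]
    have hs : Real.sin (π / p) ≠ 0 := by
      refine Real.sin_pos_of_pos_of_lt_pi ?_ ?_ |>.ne'
      · positivity
      · rw [div_lt_iff₀ hp0]; nlinarith [Real.pi_pos]
    field_simp
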